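/- Let F be an analytic function on a neighbourhood of the closed disk of radius r < 1 which has no zeros in the open disk of radius r. Suppose max_{|z|=r} log|F| ≤ 3 log σ and that there exists w with |w| = 1−2δ (where δ = 1−r, 0 < δ ≤ 1/4) such that log|F(w)| ≥ −(log σ)², for some σ ≥ e. Then for every γ with 1 < γ ≤ 1/δ, min_{|z| ≤ (1−γδ)} log|F(z)| ≥ −(C/((γ−1)δ²)) (log σ)² for a universal constant C > 0. -/

import Mathlib

open Metric Real
open scoped ENNReal NNReal

lemma normSq_identity (a ζ : ℂ) :
    Complex.normSq (ζ + (starRingEnd ℂ) a) - Complex.normSq (ζ - a) = 4 * ζ.re * a.re := by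
  simp only [Complex.normSq_apply, Complex.add_re, Complex.add_im, Complex.sub_re,
    Complex.sub_im, Complex.conj_re, Complex.conj_im]
  ring

lemma re_identity (a u : ℂ) :
    ((a + (starRingEnd ℂ) a * u) * (starRingEnd ℂ) (1 - u)).re
      = a.re * (1 - Complex.normSq u) := by
  simp only [Complex.mul_re, Complex.mul_im, Complex.add_re, Complex.add_im, Complex.sub_re,
    Complex.sub_im, Complex.conj_re, Complex.conj_im, Complex.one_re, Complex.one_im,
    Complex.normSq_apply]
  ring

lemma harnack_strict {r : ℝ} (hr : 0 < r) {G : ℂ → ℂ}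
    (hG : DifferentiableOn ℂ G (ball 0 r))
    (hpos : ∀ ζ ∈ ball (0:ℂ) r, 0 < (G ζ).re) {z : ℂ} (hz : z ∈ ball (0:ℂ) r) :
    (G 0).re * ((r - ‖z‖) / (r + ‖z‖)) ≤ (G z).re ∧
      (G z).re ≤ (G 0).re * ((r + ‖z‖) / (r - ‖z‖)) := by
  have h0mem : (0:ℂ) ∈ ball (0:ℂ) r := mem_ball_self hr
  set a : ℂ := G 0 with hadef
  have hα : 0 < a.re := hpos 0 h0mem
  have hden : ∀ ζ ∈ ball (0:ℂ) r, G ζ + (starRingEnd ℂ) a ≠ 0 := by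
    intro ζ hζ h
    have : (G ζ + (starRingEnd ℂ) a).re = 0 := by rw [h]; simp
    rw [Complex.add_re, Complex.conj_re] at this
    have := hpos ζ hζ
    linarith
  set φ : ℂ → ℂ := fun ζ => (G ζ - a) / (G ζ + (starRingEnd ℂ) a) with hφdef
  have hφdiff : DifferentiableOn ℂ φ (ball 0 r) :=
    (hG.sub_const a).div (hG.add_const _) hden
  have hφ0 : φ 0 = 0 := by simp [hφdef, hadef]
  have hmaps : Set.MapsTo φ (ball (0:ℂ) r) (ball (φ 0) 1) := by
    intro ζ hζ
    rw [hφ0, mem_ball_zero_iff, hφdef]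
    rw [norm_div, div_lt_one (by
      simpa [norm_pos_iff] using hden ζ hζ)]
    have hkey := normSq_identity a (G ζ)
    have h1 : Complex.normSq (G ζ - a) < Complex.normSq (G ζ + (starRingEnd ℂ) a) := by
      nlinarith [hpos ζ hζ, hα]
    have h2 : ‖G ζ - a‖ ^ 2 < ‖G ζ + (starRingEnd ℂ) a‖ ^ 2 := by
      rwa [← Complex.sq_norm, ← Complex.sq_norm] at h1
    exact lt_of_pow_lt_pow_left₀ 2 (norm_nonneg _) h2
  have hSch := Complex.dist_le_div_mul_dist_of_mapsTo_ball hφdiff (hmaps.mono_right ball_subset_closedBall) hz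
  rw [hφ0, dist_zero_right, dist_zero_right] at hSch
  -- s := ‖φ z‖, bounded by ‖z‖/r
  set u : ℂ := φ z with hudef
  set s : ℝ := ‖u‖ with hsdef
  have hs_le : s * r ≤ ‖z‖ := by
    have : s ≤ 1 / r * ‖z‖ := hSch
    calc s * r ≤ (1 / r * ‖z‖) * r := by nlinarith
    _ = ‖z‖ := by field_simp
  have hzr : ‖z‖ < r := mem_ball_zero_iff.1 hz
  have hs1 : s < 1 := by
    rcases le_or_gt 1 s with h | h
    · nlinarith [norm_nonneg z]
    · exact h
  have hs0 : 0 ≤ s := norm_nonneg _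
  have hune : (1:ℂ) - u ≠ 0 := by
    intro h
    have hu1 : u = 1 := by linear_combination -h
    have : s = 1 := by rw [hsdef, hu1]; simp
    linarith
  -- key algebraic identity
  have hueq : u * (G z + (starRingEnd ℂ) a) = G z - a := by
    rw [hudef, hφdef]
    simp only
    rw [div_mul_cancel₀ _ (hden z hz)]
  have hkey1 : G z * (1 - u) = a + (starRingEnd ℂ) a * u := by linear_combination -hueq
  have hkey2 : (G z).re * Complex.normSq (1 - u) = a.re * (1 - Complex.normSq u) := by
    have := congrArg (fun w => (w * (starRingEnd ℂ) (1 - u)).re) hkey1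
    rw [mul_assoc, Complex.mul_conj] at this
    rw [re_identity] at this
    rw [← this]
    simp [Complex.mul_re, Complex.ofReal_re]
  have hNpos : 0 < Complex.normSq (1 - u) := Complex.normSq_pos.2 hune
  have hNub : Complex.normSq (1 - u) ≤ (1 + s) ^ 2 := by
    have h1 : ‖(1:ℂ) - u‖ ≤ 1 + s := by
      calc ‖(1:ℂ) - u‖ ≤ ‖(1:ℂ)‖ + ‖u‖ := norm_sub_le _ _
      _ = 1 + s := by simp [hsdef]
    have h2 : ‖(1:ℂ) - u‖ ^ 2 = Complex.normSq (1 - u) := by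
      rw [← Complex.sq_norm]
    nlinarith [norm_nonneg ((1:ℂ) - u)]
  have hNlb : (1 - s) ^ 2 ≤ Complex.normSq (1 - u) := by
    have h1 : 1 - s ≤ ‖(1:ℂ) - u‖ := by
      have := norm_sub_norm_le (1:ℂ) u
      simpa [hsdef] using this
    have h2 : ‖(1:ℂ) - u‖ ^ 2 = Complex.normSq (1 - u) := by
      rw [← Complex.sq_norm]
    nlinarith [norm_nonneg ((1:ℂ) - u), hs1.le]
  have hnsq : Complex.normSq u = s ^ 2 := by
    rw [← Complex.sq_norm]
  rw [hnsq] at hkey2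
  have hGzpos : 0 < (G z).re := hpos z hz
  set x : ℝ := ‖z‖ with hxdef
  have hx0 : 0 ≤ x := norm_nonneg _
  set K := Complex.normSq (1 - u) with hKdef
  have hrx : (0:ℝ) < r - x := by linarith
  have hRx : (0:ℝ) < r + x := by linarith
  have h3 : 0 ≤ x - s * r := by linarith
  have hs1' : (0:ℝ) ≤ 1 + s := by linarith
  have hs1'' : (0:ℝ) ≤ 1 - s := by linarith
  constructor
  · have t1 : a.re * (r - x) * K ≤ a.re * (r - x) * (1 + s) ^ 2 :=
      mul_le_mul_of_nonneg_left hNub (by positivity)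
    have t2 : a.re * (r - x) * (1 + s) ^ 2 ≤ a.re * (1 - s ^ 2) * (r + x) := by
      nlinarith [mul_nonneg (mul_nonneg hα.le hs1') h3]
    have t3 : a.re * (1 - s ^ 2) * (r + x) = (G z).re * (r + x) * K := by
      rw [← hkey2]; ring
    have P : a.re * (r - x) * K ≤ (G z).re * (r + x) * K := t1.trans (t2.trans_eq t3)
    have P' : a.re * (r - x) ≤ (G z).re * (r + x) := le_of_mul_le_mul_right P hNpos
    rw [← mul_div_assoc, div_le_iff₀ hRx]
    exact P'
  · have u1 : (G z).re * (r - x) * K = a.re * (1 - s ^ 2) * (r - x) := by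
      rw [← hkey2]; ring
    have u2 : a.re * (1 - s ^ 2) * (r - x) ≤ a.re * (r + x) * (1 - s) ^ 2 := by
      nlinarith [mul_nonneg (mul_nonneg hα.le hs1'') h3]
    have u3 : a.re * (r + x) * (1 - s) ^ 2 ≤ a.re * (r + x) * K :=
      mul_le_mul_of_nonneg_left hNlb (by positivity)
    have P : (G z).re * (r - x) * K ≤ a.re * (r + x) * K := u1.trans_le (u2.trans u3)
    have P' : (G z).re * (r - x) ≤ a.re * (r + x) := le_of_mul_le_mul_right P hNpos
    rw [← mul_div_assoc, le_div_iff₀ hrx]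
    exact P'

lemma harnack_nonneg {r : ℝ} (hr : 0 < r) {G : ℂ → ℂ}
    (hG : DifferentiableOn ℂ G (ball 0 r))
    (hpos : ∀ ζ ∈ ball (0:ℂ) r, 0 ≤ (G ζ).re) {z : ℂ} (hz : z ∈ ball (0:ℂ) r) :
    (G 0).re * ((r - ‖z‖) / (r + ‖z‖)) ≤ (G z).re ∧
      (G z).re ≤ (G 0).re * ((r + ‖z‖) / (r - ‖z‖)) := by
  have hzr : ‖z‖ < r := mem_ball_zero_iff.1 hz
  have hx0 : (0:ℝ) ≤ ‖z‖ := norm_nonneg _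
  have hRx : (0:ℝ) < r + ‖z‖ := by linarith
  have hrx : (0:ℝ) < r - ‖z‖ := by linarith
  have hlo0 : 0 ≤ (r - ‖z‖) / (r + ‖z‖) := by positivity
  have hhi0 : 0 < (r + ‖z‖) / (r - ‖z‖) := by positivity
  have key : ∀ ε : ℝ, 0 < ε →
      ((G 0).re + ε) * ((r - ‖z‖) / (r + ‖z‖)) ≤ (G z).re + ε ∧
      (G z).re + ε ≤ ((G 0).re + ε) * ((r + ‖z‖) / (r - ‖z‖)) := by
    intro ε hε
    have hGε : DifferentiableOn ℂ (fun ζ => G ζ + (ε:ℂ)) (ball 0 r) := hG.add_const _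
    have hpos' : ∀ ζ ∈ ball (0:ℂ) r, 0 < ((fun ζ => G ζ + (ε:ℂ)) ζ).re := by
      intro ζ hζ
      simp only [Complex.add_re, Complex.ofReal_re]
      have := hpos ζ hζ; linarith
    have := harnack_strict hr hGε hpos' hz
    simpa only [Complex.add_re, Complex.ofReal_re] using this
  constructor
  · refine le_of_forall_pos_le_add fun ε hε => ?_
    have h1 := (key ε hε).1
    nlinarith [mul_nonneg hε.le hlo0]
  · refine le_of_forall_pos_le_add fun ε hε => ?_
    have hε' : 0 < ε / ((r + ‖z‖) / (r - ‖z‖)) := by positivity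
    have h1 := (key _ hε').2
    have h2 : ε / ((r + ‖z‖) / (r - ‖z‖)) * ((r + ‖z‖) / (r - ‖z‖)) = ε :=
      div_mul_cancel₀ _ (ne_of_gt hhi0)
    nlinarith [h1, h2, hε'.le]


lemma exists_clog {R : ℝ} {F : ℂ → ℂ}
    (hF : DifferentiableOn ℂ F (ball 0 R))
    (hFne : ∀ ζ ∈ ball (0:ℂ) R, F ζ ≠ 0) {ρ : ℝ} (hρ : 0 < ρ) (hρR : ρ < R) :
    ∃ L : ℂ → ℂ, DifferentiableOn ℂ L (ball 0 ρ) ∧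
      ∀ ζ ∈ ball (0:ℂ) ρ, Complex.exp (L ζ) = F ζ := by
  set ρ' : ℝ := (ρ + R) / 2 with hρ'def
  have hρ'pos : 0 < ρ' := by simp only [hρ'def]; linarith
  have hρρ' : ρ < ρ' := by simp only [hρ'def]; linarith
  have hρ'R : ρ' < R := by simp only [hρ'def]; linarith
  -- the logarithmic derivative
  set h : ℂ → ℂ := fun ζ => deriv F ζ / F ζ with hhdef
  have hanal : AnalyticOnNhd ℂ F (ball 0 R) := hF.analyticOnNhd isOpen_ball
  have hdF : DifferentiableOn ℂ (deriv F) (ball 0 R) := hanal.deriv.differentiableOn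
  have hdiff : DifferentiableOn ℂ h (ball 0 R) := hdF.div hF hFne
  have hcl : DiffContOnCl ℂ h (ball 0 ρ') := by
    refine ⟨hdiff.mono (ball_subset_ball hρ'R.le), ?_⟩
    rw [closure_ball (0:ℂ) hρ'pos.ne']
    exact hdiff.continuousOn.mono (closedBall_subset_ball hρ'R)
  have hρ'nn : ((ρ'.toNNReal : ℝ)) = ρ' := Real.coe_toNNReal _ hρ'pos.le
  have hcl' : DiffContOnCl ℂ h (ball 0 (ρ'.toNNReal : ℝ)) := by rwa [hρ'nn]
  have hFP := hcl'.hasFPowerSeriesOnBall (by simpa using hρ'pos)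
  set p := cauchyPowerSeries h 0 (ρ'.toNNReal : ℝ) with hpdef
  have hradius : (ρ.toNNReal : ℝ≥0∞) < p.radius := by
    refine lt_of_lt_of_le ?_ hFP.r_le
    exact_mod_cast (Real.toNNReal_lt_toNNReal_iff hρ'pos).2 hρρ'
  have hsum : Summable fun n => ‖p.coeff n‖ * ρ ^ n := by
    have := p.summable_norm_mul_pow hradius
    simpa [FormalMultilinearSeries.norm_apply_eq_norm_coef,
      Real.coe_toNNReal _ hρ.le] using this
  -- termwise primitive
  set g : ℕ → ℂ → ℂ := fun n ζ => (p.coeff n / (n + 1)) * ζ ^ (n + 1) with hgdef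
  set g' : ℕ → ℂ → ℂ := fun n ζ => p.coeff n * ζ ^ n with hg'def
  have hgderiv : ∀ n, ∀ y : ℂ, HasDerivAt (g n) (g' n y) y := by
    intro n y
    have h1 : HasDerivAt (fun ζ : ℂ => ζ ^ (n + 1)) ((n + 1 : ℕ) * y ^ n) y := by
      simpa using hasDerivAt_pow (n + 1) y
    have h2 := h1.const_mul (p.coeff n / (n + 1))
    refine h2.congr_deriv ?_
    have hne : ((n : ℂ) + 1) ≠ 0 := Nat.cast_add_one_ne_zero n
    push_cast
    field_simp
    ring
  have hgbound : ∀ n, ∀ y ∈ ball (0:ℂ) ρ, ‖g' n y‖ ≤ ‖p.coeff n‖ * ρ ^ n := by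
    intro n y hy
    rw [mem_ball_zero_iff] at hy
    calc ‖g' n y‖ = ‖p.coeff n‖ * ‖y‖ ^ n := by simp [hg'def, norm_pow]
    _ ≤ ‖p.coeff n‖ * ρ ^ n := by
        gcongr
  have hg0 : Summable fun n => g n 0 := by
    simp only [hgdef, zero_pow (Nat.succ_ne_zero _), mul_zero]
    exact summable_zero
  have hL0 : ∀ y ∈ ball (0:ℂ) ρ,
      HasDerivAt (fun ζ => ∑' n, g n ζ) (∑' n, g' n y) y := by
    intro y hy
    exact hasDerivAt_tsum_of_isPreconnected hsum isOpen_ball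
      (convex_ball _ _).isPreconnected (fun n y _ => hgderiv n y) hgbound
      (mem_ball_self hρ) hg0 hy
  have htsum_eq : ∀ y ∈ ball (0:ℂ) ρ, (∑' n, g' n y) = h y := by
    intro y hy
    have hy' : y ∈ Metric.eball (0:ℂ) (ρ'.toNNReal : ℝ≥0∞) := by
      rw [Metric.emetric_ball_nnreal, hρ'nn]
      exact ball_subset_ball hρρ'.le hy
    have := hFP.hasSum hy'
    have heq : (fun n => (p n) fun _ => y) = fun n => g' n y := by
      funext n
      rw [FormalMultilinearSeries.apply_eq_pow_smul_coeff, smul_eq_mul]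
      simp [hg'def, mul_comm]
    rw [heq] at this
    simpa using this.tsum_eq
  -- the logarithm
  set L : ℂ → ℂ := fun ζ => (∑' n, g n ζ) + Complex.log (F 0) with hLdef
  have hLderiv : ∀ y ∈ ball (0:ℂ) ρ, HasDerivAt L (h y) y := by
    intro y hy
    have := (hL0 y hy).add_const (Complex.log (F 0))
    rwa [htsum_eq y hy] at this
  refine ⟨L, fun y hy => ((hLderiv y hy).differentiableAt).differentiableWithinAt, ?_⟩
  -- exp L = F via constancy of F * exp (-L)
  have hsub : ball (0:ℂ) ρ ⊆ ball 0 R := ball_subset_ball hρR.le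
  set φ : ℂ → ℂ := fun ζ => F ζ * Complex.exp (-L ζ) with hφdef
  have hφderiv : ∀ y ∈ ball (0:ℂ) ρ, HasDerivAt φ 0 y := by
    intro y hy
    have hFy : HasDerivAt F (deriv F y) y :=
      (hF.differentiableAt (isOpen_ball.mem_nhds (hsub hy))).hasDerivAt
    have hEy : HasDerivAt (fun ζ => Complex.exp (-L ζ))
        (Complex.exp (-L y) * (-(h y))) y := ((hLderiv y hy).neg).cexp
    have := hFy.mul hEy
    refine this.congr_deriv ?_
    have hne : F y ≠ 0 := hFne y (hsub hy)
    simp only [hhdef]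
    field_simp
    ring
  have hφdiff : DifferentiableOn ℂ φ (ball 0 ρ) :=
    fun y hy => ((hφderiv y hy).differentiableAt).differentiableWithinAt
  have hφconst : ∀ y ∈ ball (0:ℂ) ρ, φ y = φ 0 := by
    intro y hy
    refine (convex_ball (0:ℂ) ρ).is_const_of_fderivWithin_eq_zero hφdiff ?_ hy (mem_ball_self hρ)
    intro x hx
    rw [fderivWithin_of_isOpen isOpen_ball hx]
    have := (hφderiv x hx).hasFDerivAt.fderiv
    rw [this]
    refine ContinuousLinearMap.ext fun v => ?_
    simp
  intro y hy
  have hF0 : F 0 ≠ 0 := hFne 0 (mem_ball_self (lt_trans hρ hρR))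
  have hφ0 : φ 0 = 1 := by
    have hg00 : (∑' n, g n 0) = 0 := by
      simp [hgdef, zero_pow (Nat.succ_ne_zero _)]
    simp only [hφdef, hLdef, hg00, zero_add, Complex.exp_neg, Complex.exp_log hF0]
    field_simp
  have hconst := hφconst y hy
  rw [hφ0] at hconst
  have h2 : F y * Complex.exp (-L y) = 1 := hconst
  rw [Complex.exp_neg] at h2
  have hexpne : Complex.exp (L y) ≠ 0 := Complex.exp_ne_zero _
  field_simp at h2
  exact h2.symm

set_option maxHeartbeats 1000000 in
/-- If F is analytic in a neighbourhood of the closed disk of radius r = 1 − δ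
(0 < δ ≤ 1/4), zero-free in the open disk of radius r, max_{|z|=r} log|F| ≤ 3 log σ
(σ ≥ e) and log|F(w)| ≥ −(log σ)² for some |w| = 1 − 2δ, then for all 1 < γ ≤ 1/δ,
log|F| ≥ −(C/((γ−1)δ²))(log σ)² on the disk of radius 1 − γδ, C universal. -/
theorem hole_prob_stmt_18 :
    ∃ C > (0 : ℝ), ∀ (δ : ℝ), 0 < δ → δ ≤ 1 / 4 → ∀ (r : ℝ), r = 1 - δ →
      ∀ (F : ℂ → ℂ),
      (∃ U : Set ℂ, IsOpen U ∧ closedBall (0 : ℂ) r ⊆ U ∧ DifferentiableOn ℂ F U) →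
      (∀ z ∈ ball (0 : ℂ) r, F z ≠ 0) →
      ∀ (σ : ℝ), Real.exp 1 ≤ σ →
      (∀ z : ℂ, ‖z‖ = r → Real.log ‖F z‖ ≤ 3 * Real.log σ) →
      (∃ w : ℂ, ‖w‖ = 1 - 2 * δ ∧ Real.log ‖F w‖ ≥ -(Real.log σ) ^ 2) →
      ∀ (γ : ℝ), 1 < γ → γ ≤ 1 / δ →
      ∀ z : ℂ, ‖z‖ ≤ 1 - γ * δ →
        Real.log ‖F z‖ ≥ -(C / ((γ - 1) * δ ^ 2)) * (Real.log σ) ^ 2 := by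
  refine ⟨128, by norm_num, ?_⟩
  intro δ hδ hδ4 r hrdef F hU hFne σ hσ hbound hw γ hγ1 hγ2 z hzle
  obtain ⟨U, hUopen, hUsub, hUdiff⟩ := hU
  obtain ⟨w, hwnorm, hwlog⟩ := hw
  subst hrdef
  have hσpos : (0:ℝ) < σ := lt_of_lt_of_le (Real.exp_pos 1) hσ
  have hlσ : 1 ≤ Real.log σ := (Real.le_log_iff_exp_le hσpos).2 hσ
  set lσ := Real.log σ with hlσdef
  set M : ℝ := 3 * lσ with hMdef
  have hM0 : 0 ≤ M := by simp only [hMdef]; linarith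
  have hr0 : (0:ℝ) < 1 - δ := by linarith
  have hγδ1 : γ * δ ≤ 1 := by
    have := (le_div_iff₀ hδ).1 hγ2
    linarith
  set m := min γ 2 with hmdef
  have hm1 : 1 < m := lt_min hγ1 one_lt_two
  have hm2 : m ≤ 2 := min_le_right _ _
  have hmγ : m ≤ γ := min_le_left _ _
  set ρ : ℝ := 1 - (1 + m) * δ / 2 with hρdef
  have hρpos : 0 < ρ := by
    have h1 : (1 + m) * δ ≤ 3 * δ :=
      mul_le_mul_of_nonneg_right (by linarith) hδ.le
    simp only [hρdef]; linarith
  have hρr : ρ < 1 - δ := by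
    have h1 : 0 < (m - 1) * δ := mul_pos (by linarith) hδ
    simp only [hρdef]; linarith
  have hρ1 : ρ < 1 := by
    have h1 : 0 < (1 + m) * δ := mul_pos (by linarith) hδ
    simp only [hρdef]; linarith
  -- max modulus principle
  have hFballdiff : DifferentiableOn ℂ F (ball 0 (1 - δ)) :=
    hUdiff.mono (ball_subset_closedBall.trans hUsub)
  have hFcl : DiffContOnCl ℂ F (ball 0 (1 - δ)) := by
    refine ⟨hFballdiff, ?_⟩
    rw [closure_ball (0:ℂ) hr0.ne']
    exact hUdiff.continuousOn.mono hUsub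
  have hmax : ∀ ζ ∈ closedBall (0:ℂ) (1 - δ), ‖F ζ‖ ≤ Real.exp M := by
    intro ζ hζ
    refine Complex.norm_le_of_forall_mem_frontier_norm_le isBounded_ball hFcl ?_ ?_
    · intro ξ hξ
      rw [frontier_ball _ hr0.ne'] at hξ
      have hξn : ‖ξ‖ = 1 - δ := by
        simpa [mem_sphere_iff_norm] using hξ
      rcases eq_or_ne (F ξ) 0 with h0 | h0
      · simp [h0, (Real.exp_pos M).le]
      · have hpos : (0:ℝ) < ‖F ξ‖ := norm_pos_iff.2 h0
        calc ‖F ξ‖ = Real.exp (Real.log ‖F ξ‖) := (Real.exp_log hpos).symm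
        _ ≤ Real.exp M := Real.exp_le_exp.2 (hbound ξ hξn)
    · rwa [closure_ball (0:ℂ) hr0.ne']
  -- holomorphic logarithm on ball ρ
  obtain ⟨L, hLdiff, hLexp⟩ := exists_clog hFballdiff hFne hρpos hρr
  have hsubρ : ball (0:ℂ) ρ ⊆ ball 0 (1 - δ) := ball_subset_ball hρr.le
  have hre : ∀ ζ ∈ ball (0:ℂ) ρ, (L ζ).re = Real.log ‖F ζ‖ := by
    intro ζ hζ
    have h1 : ‖F ζ‖ = Real.exp (L ζ).re := by
      rw [← hLexp ζ hζ, Complex.norm_exp]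
    rw [h1, Real.log_exp]
  set G : ℂ → ℂ := fun ζ => (M : ℂ) - L ζ with hGdef
  have hGdiff : DifferentiableOn ℂ G (ball 0 ρ) := (differentiableOn_const _).sub hLdiff
  have hGre : ∀ ζ ∈ ball (0:ℂ) ρ, (G ζ).re = M - Real.log ‖F ζ‖ := by
    intro ζ hζ
    simp only [hGdef, Complex.sub_re, Complex.ofReal_re, hre ζ hζ]
  have hGnonneg : ∀ ζ ∈ ball (0:ℂ) ρ, 0 ≤ (G ζ).re := by
    intro ζ hζ
    rw [hGre ζ hζ]
    have h1 : ‖F ζ‖ ≤ Real.exp M := hmax ζ (ball_subset_closedBall (hsubρ hζ))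
    have h2 : (0:ℝ) < ‖F ζ‖ := norm_pos_iff.2 (hFne ζ (hsubρ hζ))
    have := (Real.log_le_iff_le_exp h2).2 h1
    linarith
  -- memberships
  have hwmem : w ∈ ball (0:ℂ) ρ := by
    rw [mem_ball_zero_iff, hwnorm]
    have h1 : 0 < (3 - m) * δ := mul_pos (by linarith) hδ
    simp only [hρdef]; linarith
  have hzmem : z ∈ ball (0:ℂ) ρ := by
    rw [mem_ball_zero_iff]
    have h1 : 0 < (2 * γ - 1 - m) * δ := mul_pos (by linarith) hδ
    have : ‖z‖ ≤ 1 - γ * δ := hzle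
    simp only [hρdef]; linarith
  have H1 := (harnack_nonneg hρpos hGdiff hGnonneg hwmem).1
  have H2 := (harnack_nonneg hρpos hGdiff hGnonneg hzmem).2
  set α : ℝ := (G 0).re with hαdef
  set A : ℝ := (G w).re with hAdef
  set B : ℝ := (G z).re with hBdef
  have hα0 : 0 ≤ α := hGnonneg 0 (mem_ball_self hρpos)
  have hB0 : 0 ≤ B := hGnonneg z hzmem
  have hlogz : Real.log ‖F z‖ = M - B := by
    have h1 := hGre z hzmem
    simp only [← hBdef] at h1
    linarith
  have hA4 : A ≤ 4 * lσ ^ 2 := by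
    have h1 : A = M - Real.log ‖F w‖ := hGre w hwmem
    have h2 : Real.log ‖F w‖ ≥ -lσ ^ 2 := hwlog
    have h3 : lσ ≤ lσ ^ 2 := by nlinarith
    simp only [hMdef] at h1
    linarith
  -- numeric bounds on radii
  have n1 : δ / 2 ≤ ρ - ‖w‖ := by
    rw [hwnorm]
    have h1 : 0 ≤ (2 - m) * δ := mul_nonneg (by linarith) hδ.le
    simp only [hρdef]; linarith
  have n2 : ρ + ‖w‖ ≤ 2 := by
    rw [hwnorm]; linarith
  have n2' : 0 < ρ + ‖w‖ := by
    have := norm_nonneg w; linarith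
  have n3 : (γ - 1) * δ / 4 ≤ ρ - ‖z‖ := by
    have h1 : 0 ≤ (3 * γ - 1 - 2 * m) * δ := mul_nonneg (by linarith) hδ.le
    have h2 : ‖z‖ ≤ 1 - γ * δ := hzle
    simp only [hρdef]; linarith
  have n3' : 0 < ρ - ‖z‖ :=
    lt_of_lt_of_le (div_pos (mul_pos (by linarith) hδ) (by norm_num)) n3
  have n4 : ρ + ‖z‖ ≤ 2 := by
    have h2 : ‖z‖ ≤ 1 - γ * δ := hzle
    have h3 : 0 < γ * δ := mul_pos (by linarith) hδ
    linarith
  clear_value lσ M m ρ α A B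
  clear hαdef hAdef hBdef hGre hGnonneg hGdiff hGdef hre hLexp hLdiff hmax hFcl hFballdiff hbound hwlog G L
  -- step 1 : δ * α ≤ 4 * A
  have step1 : δ * α ≤ 4 * A := by
    have hfrac : δ / 4 ≤ (ρ - ‖w‖) / (ρ + ‖w‖) := by
      rw [div_le_div_iff₀ (by norm_num) n2']
      nlinarith [mul_le_mul_of_nonneg_left n2 hδ.le, n1, hδ]
    have h1 : α * (δ / 4) ≤ α * ((ρ - ‖w‖) / (ρ + ‖w‖)) :=
      mul_le_mul_of_nonneg_left hfrac hα0
    have h2 := h1.trans H1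
    linarith
  -- step 2 : B * (ρ - ‖z‖) ≤ α * (ρ + ‖z‖)
  have step2 : B * (ρ - ‖z‖) ≤ α * (ρ + ‖z‖) := by
    have h1 := mul_le_mul_of_nonneg_right H2 n3'.le
    have h2 : α * ((ρ + ‖z‖) / (ρ - ‖z‖)) * (ρ - ‖z‖) = α * (ρ + ‖z‖) := by
      rw [mul_assoc, div_mul_cancel₀ _ n3'.ne']
    linarith [h1, h2.le, h2.ge]
  have s1 : B * ((γ - 1) * δ / 4) ≤ B * (ρ - ‖z‖) := mul_le_mul_of_nonneg_left n3 hB0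
  have s3 : α * (ρ + ‖z‖) ≤ α * 2 := mul_le_mul_of_nonneg_left n4 hα0
  have s6 : B * ((γ - 1) * δ / 4) ≤ 2 * α := by linarith
  have s7 : δ * (B * ((γ - 1) * δ / 4)) ≤ δ * (2 * α) := mul_le_mul_of_nonneg_left s6 hδ.le
  have s8 : B * ((γ - 1) * δ ^ 2) ≤ 128 * lσ ^ 2 := by nlinarith [s7, step1, hA4]
  have hD : 0 < (γ - 1) * δ ^ 2 := mul_pos (by linarith) (pow_pos hδ 2)
  have hBle : B ≤ 128 / ((γ - 1) * δ ^ 2) * lσ ^ 2 := by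
    rw [div_mul_eq_mul_div, le_div_iff₀ hD]
    linarith
  rw [ge_iff_le, hlogz]
  linarith [hBle, hM0]
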